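/- Let V be a finite-dimensional F_q-vector space of functions on the affine space A^n(F_q) (i.e., V is the image of a linear map φ : F → Map(F_q^n, F_q)). Any algebraic set defined as the common zero locus of the images under φ of finitely many elements of F can be defined as the common zero locus of the images of at most n elements of F, each an F_q-linear combination of the originals. -/

import Mathlib

/-- A matrix is in reduced row echelon form: every row is either zero, or has a
leading entry `1` such that all entries to its left in that row are zero, all other
entries in its column are zero, and every later row vanishes at that column and to
its left (so pivots strictly increase and zero rows are at the bottom). -/
def IsRREF {K : Type*} [Field K] {m n : ℕ} (M : Matrix (Fin m) (Fin n) K) : Prop :=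
  ∀ i : Fin m, (∀ j, M i j = 0) ∨
    ∃ j : Fin n, M i j = 1 ∧ (∀ j', j' < j → M i j' = 0) ∧
      (∀ i', i' ≠ i → M i' j = 0) ∧
      (∀ i', i < i' → ∀ j', j' ≤ j → M i' j' = 0)

/-- The linear functional `c ↦ ∑ i, c i * a i` on `Fin k → F`. -/
def dotL {F : Type*} [Field F] {k : ℕ} (a : Fin k → F) : (Fin k → F) →ₗ[F] F where
  toFun c := ∑ i, c i * a i
  map_add' c d := by simp [add_mul, Finset.sum_add_distrib]
  map_smul' r c := by simp [Finset.mul_sum, mul_assoc]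

lemma dotL_apply {F : Type*} [Field F] {k : ℕ} (a c : Fin k → F) :
    dotL a c = ∑ i, c i * a i := rfl

lemma card_ker_dotL {F : Type*} [Field F] [Fintype F] {k : ℕ} {a : Fin k → F}
    (ha : a ≠ 0) :
    Nat.card (LinearMap.ker (dotL a)) = Fintype.card F ^ (k - 1) := by
  have hsurj : Function.Surjective (dotL a) := by
    obtain ⟨i, hi⟩ := Function.ne_iff.mp ha
    intro y
    refine ⟨Pi.single i (y * (a i)⁻¹), ?_⟩
    simp only [dotL_apply, Pi.single_apply]
    rw [Finset.sum_eq_single i]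
    · rw [if_pos rfl, mul_assoc, inv_mul_cancel₀ hi, mul_one]
    · intro b _ hb; rw [if_neg hb, zero_mul]
    · simp
  have hrange : LinearMap.range (dotL a) = ⊤ := LinearMap.range_eq_top.mpr hsurj
  have h1 : Module.finrank F (LinearMap.range (dotL a)) = 1 := by
    rw [hrange, finrank_top, Module.finrank_self]
  have h2 := LinearMap.finrank_range_add_finrank_ker (dotL a)
  rw [h1, Module.finrank_pi, Fintype.card_fin] at h2
  have hker : Module.finrank F (LinearMap.ker (dotL a)) = k - 1 := by omega
  have : Fintype (LinearMap.ker (dotL a)) := Fintype.ofFinite _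
  rw [Nat.card_eq_fintype_card]
  conv_lhs => rw [Module.card_eq_pow_finrank (K := F)]
  rw [hker]

theorem stmt_9 {F : Type*} [Field F] [Fintype F] (n : ℕ) (hn : 0 < n)
    (V : Type*) [AddCommGroup V] [Module F V]
    (φ : V →ₗ[F] ((Fin n → F) → F)) (k : ℕ) (f : Fin k → V) :
    ∃ g : Fin n → V,
      (∀ i, g i ∈ Submodule.span F (Set.range f)) ∧
        {x : Fin n → F | ∀ i, φ (g i) x = 0} =
          {x : Fin n → F | ∀ i, φ (f i) x = 0} := by
  classical
  by_cases hall : ∀ x i, φ (f i) x = 0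
  · refine ⟨fun _ => 0, fun i => Submodule.zero_mem _, ?_⟩
    ext x
    simp [hall x]
  -- otherwise, k ≥ 1
  have hk : 1 ≤ k := by
    by_contra h
    push_neg at h
    interval_cases k
    exact hall fun x i => absurd i.2 (by simp)
  set q := Fintype.card F with hq
  have hq2 : 2 ≤ q := Fintype.one_lt_card
  -- the vector of values of the f's at a point x
  set a : (Fin n → F) → Fin k → F := fun x i => φ (f i) x with ha
  -- points not in the common zero locus
  set S : Finset (Fin n → F) := Finset.univ.filter (fun x => a x ≠ 0) with hS
  -- coefficient tuples all of whose combinations vanish at x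
  set Bad : (Fin n → F) → Finset (Fin n → Fin k → F) :=
    fun x => Finset.univ.filter (fun c => ∀ j, dotL (a x) (c j) = 0) with hBad
  have hBadcard : ∀ x ∈ S, (Bad x).card = (q ^ (k - 1)) ^ n := by
    intro x hx
    have hax : a x ≠ 0 := by simpa [hS] using hx
    have e0 : (Bad x).card
        = Nat.card {c : Fin n → Fin k → F // ∀ j, dotL (a x) (c j) = 0} := by
      rw [Nat.card_eq_fintype_card, Fintype.card_subtype, hBad]
    have e1 : Nat.card {c : Fin n → Fin k → F // ∀ j, dotL (a x) (c j) = 0}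
        = Nat.card (Fin n → {b : Fin k → F // dotL (a x) b = 0}) :=
      Nat.card_congr (Equiv.subtypePiEquivPi (β := fun _ : Fin n => Fin k → F)
        (p := fun _ b => dotL (a x) b = 0))
    have e2 : Nat.card {b : Fin k → F // dotL (a x) b = 0} = q ^ (k - 1) := by
      rw [← card_ker_dotL hax]
      exact Nat.card_congr (Equiv.subtypeEquivRight fun b => (LinearMap.mem_ker).symm)
    rw [e0, e1, Nat.card_pi]
    rw [Finset.prod_const, Finset.card_univ, Fintype.card_fin, e2]
  have hmem0 : ∀ x, (0 : Fin n → Fin k → F) ∈ Bad x := by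
    intro x
    simp [hBad]
  -- union bound
  set U : Finset (Fin n → Fin k → F) := S.biUnion Bad with hU
  have hUsub : U ⊆ insert 0 (S.biUnion fun x => (Bad x).erase 0) := by
    intro c hc
    rcases Finset.mem_biUnion.mp hc with ⟨x, hx, hcx⟩
    by_cases hc0 : c = 0
    · exact Finset.mem_insert.mpr (Or.inl hc0)
    · exact Finset.mem_insert.mpr (Or.inr (Finset.mem_biUnion.mpr
        ⟨x, hx, Finset.mem_erase.mpr ⟨hc0, hcx⟩⟩))
  have hScard : S.card ≤ q ^ n := by
    calc S.card ≤ (Finset.univ : Finset (Fin n → F)).card := Finset.card_le_card (by simp)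
    _ = q ^ n := by rw [Finset.card_univ, Fintype.card_fun, Fintype.card_fin]
  have hUcard : U.card < (q ^ (k - 1)) ^ n * q ^ n := by
    have h1 : U.card ≤ 1 + S.card * ((q ^ (k - 1)) ^ n - 1) := by
      calc U.card ≤ (insert 0 (S.biUnion fun x => (Bad x).erase 0)).card :=
            Finset.card_le_card hUsub
      _ ≤ 1 + (S.biUnion fun x => (Bad x).erase 0).card := by
            rw [add_comm]; exact Finset.card_insert_le _ _
      _ ≤ 1 + ∑ x ∈ S, ((Bad x).erase 0).card := by
            gcongr
            exact Finset.card_biUnion_le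
      _ ≤ 1 + ∑ x ∈ S, ((q ^ (k - 1)) ^ n - 1) := by
            gcongr with x hx
            rw [Finset.card_erase_of_mem (hmem0 x), hBadcard x hx]
      _ = 1 + S.card * ((q ^ (k - 1)) ^ n - 1) := by rw [Finset.sum_const, smul_eq_mul]
    set B : ℕ := (q ^ (k - 1)) ^ n with hB
    have hB1 : 1 ≤ B := hB ▸ Nat.one_le_pow _ _ (pow_pos (show 0 < q by omega) _)
    clear_value B
    have hA : 2 ≤ q ^ n := by
      calc 2 = 2 ^ 1 := rfl
      _ ≤ 2 ^ n := Nat.pow_le_pow_right (by omega) hn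
      _ ≤ q ^ n := Nat.pow_le_pow_left hq2 n
    have hgoal : 1 + q ^ n * (B - 1) < B * q ^ n := by
      obtain ⟨B', rfl⟩ : ∃ B', B = B' + 1 := ⟨B - 1, by omega⟩
      have h3 : (B' + 1) * q ^ n = B' * q ^ n + q ^ n := by ring
      rw [h3, Nat.add_sub_cancel]
      have h2 : q ^ n * B' ≤ B' * q ^ n := by rw [mul_comm]
      omega
    calc U.card ≤ 1 + S.card * (B - 1) := h1
    _ ≤ 1 + q ^ n * (B - 1) := by gcongr
    _ < B * q ^ n := hgoal
  have htotal : Fintype.card (Fin n → Fin k → F) = (q ^ (k - 1)) ^ n * q ^ n := by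
    rw [Fintype.card_fun, Fintype.card_fun, Fintype.card_fin, Fintype.card_fin,
      ← pow_mul, ← pow_mul, ← pow_add]
    congr 1
    have : k - 1 + 1 = k := by omega
    calc k * n = (k - 1 + 1) * n := by rw [this]
    _ = (k - 1) * n + n := by ring
  -- pick a good coefficient tuple
  have hcompl : (Uᶜ : Finset (Fin n → Fin k → F)).Nonempty := by
    rw [← Finset.card_pos, Finset.card_compl, htotal]
    exact Nat.sub_pos_of_lt hUcard
  obtain ⟨c, hc⟩ := hcompl
  have hcU : c ∉ U := Finset.mem_compl.mp hc
  -- the good combinations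
  refine ⟨fun j => ∑ i, c j i • f i, ?_, ?_⟩
  · intro j
    exact Submodule.sum_mem _ fun i _ =>
      Submodule.smul_mem _ _ (Submodule.subset_span ⟨i, rfl⟩)
  · have hval : ∀ j x, φ (∑ i, c j i • f i) x = dotL (a x) (c j) := by
      intro j x
      rw [map_sum, dotL_apply]
      simp [ha]
    ext x
    simp only [Set.mem_setOf_eq]
    constructor
    · intro hgx i
      by_contra hfi
      have hxS : x ∈ S := by
        simp only [hS, Finset.mem_filter, Finset.mem_univ, true_and]
        intro h0
        exact hfi (by simpa [ha] using congrFun h0 i)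
      have hcBad : c ∈ Bad x := by
        simp only [hBad, Finset.mem_filter, Finset.mem_univ, true_and]
        intro j
        rw [← hval j x]
        exact hgx j
      exact hcU (Finset.mem_biUnion.mpr ⟨x, hxS, hcBad⟩)
    · intro hfx j
      rw [hval j x, dotL_apply]
      simp only [ha]
      simp [hfx]
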